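/- Let X be a complex Banach space and Δ : S(c₀(Γ)) → S(X) a surjective isometry. Then for each n ∈ Γ and each μ ∈ 𝕋, Δ(-μe_n) = -Δ(μe_n). -/

import Mathlib

open ZeroAtInfty Metric

/-- The canonical basis vector `e n` of `c₀(Γ)`. -/
noncomputable def stdBasis {Γ : Type*} [TopologicalSpace Γ] [DiscreteTopology Γ] [DecidableEq Γ]
    (n : Γ) : C₀(Γ, ℂ) where
  toFun := fun k => if k = n then 1 else 0
  continuous_toFun := continuous_of_discreteTopology
  zero_at_infty' := by
    have h : (fun k => if k = n then (1 : ℂ) else 0) =ᶠ[Filter.cocompact Γ] 0 := by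
      refine Filter.mem_cocompact.2 ⟨{n}, isCompact_singleton, ?_⟩
      intro k hk
      simp only [Set.mem_compl_iff, Set.mem_singleton_iff] at hk
      simp [hk]
    exact Filter.Tendsto.congr' h.symm tendsto_const_nhds

section Aux

variable {Γ : Type*} [TopologicalSpace Γ] [DiscreteTopology Γ] [DecidableEq Γ]

@[simp] lemma stdBasis_apply (n k : Γ) : stdBasis n k = if k = n then (1 : ℂ) else 0 := rfl

lemma c0_apply_norm_le (f : C₀(Γ, ℂ)) (k : Γ) : ‖f k‖ ≤ ‖f‖ :=
  f.toBCF.norm_coe_le_norm k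

lemma c0_norm_le (f : C₀(Γ, ℂ)) {C : ℝ} (hC : 0 ≤ C) (h : ∀ k, ‖f k‖ ≤ C) : ‖f‖ ≤ C := by
  rw [← ZeroAtInftyContinuousMap.norm_toBCF_eq_norm]
  exact (BoundedContinuousFunction.norm_le hC).2 h

/-- If `‖a‖ ≤ 1`, `‖b‖ = 1` and `‖a - b‖ = 2`, then `a = -b` in `ℂ`. -/
lemma eq_neg_of_dist_two {a b : ℂ} (ha : ‖a‖ ≤ 1) (hb : ‖b‖ = 1) (h : ‖a - b‖ = 2) :
    a = -b := by
  have hsq : Complex.normSq (a - b) = 4 := by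
    have := Complex.sq_norm (a - b)
    rw [h] at this
    linarith [this]
  have hb2 : Complex.normSq b = 1 := by
    have := Complex.sq_norm b
    rw [hb] at this
    linarith [this]
  have ha2 : Complex.normSq a ≤ 1 := by
    have := Complex.sq_norm a
    nlinarith [norm_nonneg a, Complex.sq_norm a, ha]
  -- expand normSq (a - b) = normSq a + normSq b - 2 * re (a * conj b)
  have hexp : Complex.normSq (a - b)
      = Complex.normSq a + Complex.normSq b - 2 * (a * (starRingEnd ℂ) b).re := by
    simp [Complex.normSq_sub, Complex.mul_conj, Complex.normSq_apply, Complex.mul_re,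
      Complex.conj_re, Complex.conj_im, Complex.sub_re, Complex.sub_im]
    ring
  have hre : (a * (starRingEnd ℂ) b).re ≤ -1 := by
    rw [hexp, hb2] at hsq
    linarith
  have habs : ‖a * (starRingEnd ℂ) b‖ ≤ 1 := by
    rw [norm_mul]
    have : ‖(starRingEnd ℂ) b‖ = 1 := by
      rw [Complex.norm_conj, hb]
    rw [this, mul_one]
    exact ha
  -- hence a * conj b = -1
  have key : a * (starRingEnd ℂ) b = -1 := by
    have h1 : (a * (starRingEnd ℂ) b).re = -1 ∧ (a * (starRingEnd ℂ) b).im = 0 := by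
      set w := a * (starRingEnd ℂ) b with hw
      have h2 : w.re ^ 2 + w.im ^ 2 ≤ 1 := by
        have := Complex.sq_norm w
        rw [Complex.normSq_apply] at this
        nlinarith [norm_nonneg w]
      constructor
      · nlinarith [sq_nonneg w.im, sq_nonneg (w.re + 1)]
      · nlinarith [sq_nonneg w.im, sq_nonneg (w.re + 1)]
    apply Complex.ext
    · simp [h1.1]
    · simp [h1.2]
  have hbb : (starRingEnd ℂ) b * b = 1 := by
    have h3 := Complex.mul_conj b
    rw [mul_comm] at h3
    rw [h3, hb2]
    norm_num
  calc a = a * ((starRingEnd ℂ) b * b) := by rw [hbb, mul_one]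
    _ = a * (starRingEnd ℂ) b * b := by ring
    _ = -b := by rw [key]; ring

/-- Coordinate extraction: if `g` is supported at `j` with unimodular value there, `‖f‖ ≤ 1`
and `‖f - g‖ = 2`, then `f j = -(g j)`. -/
lemma coord_neg (f g : C₀(Γ, ℂ)) (j : Γ) (hf : ‖f‖ ≤ 1) (hgj : ‖g j‖ = 1)
    (hg0 : ∀ i, i ≠ j → g i = 0) (h2 : ‖f - g‖ = 2) : f j = -(g j) := by
  have hfj : ‖f j‖ ≤ 1 := le_trans (c0_apply_norm_le f j) hf
  have hle : ‖f - g‖ ≤ max ‖f j - g j‖ 1 := by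
    apply c0_norm_le _ (le_trans zero_le_one (le_max_right _ _))
    intro k
    by_cases hk : k = j
    · subst hk
      simp only [ZeroAtInftyContinuousMap.sub_apply]
      exact le_max_left _ _
    · have hk0 : (f - g) k = f k := by
        simp [ZeroAtInftyContinuousMap.sub_apply, hg0 k hk]
      rw [hk0]
      exact le_trans (le_trans (c0_apply_norm_le f k) hf) (le_max_right _ _)
  have h2' : ‖f j - g j‖ = 2 := by
    have hub : ‖f j - g j‖ ≤ 2 := by
      calc ‖f j - g j‖ ≤ ‖f j‖ + ‖g j‖ := norm_sub_le _ _
        _ ≤ 1 + 1 := add_le_add hfj hgj.le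
        _ = 2 := by norm_num
    have hge : (2 : ℝ) ≤ max ‖f j - g j‖ 1 := h2 ▸ hle
    rcases le_max_iff.mp hge with h | h
    · linarith
    · linarith
  exact eq_neg_of_dist_two hfj hgj h2'

end Aux

/-- **Antipodality**: a surjective isometry between the unit spheres of `c₀(Γ)` and a complex
Banach space `X` sends `-μ • eₙ` to the negative of the image of `μ • eₙ`, for `μ` unimodular. -/
theorem antipodes_c0 {Γ : Type*} [TopologicalSpace Γ] [DiscreteTopology Γ] [DecidableEq Γ]
    [Infinite Γ]
    {X : Type*} [NormedAddCommGroup X] [NormedSpace ℂ X] [CompleteSpace X]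
    (Δ : sphere (0 : C₀(Γ, ℂ)) 1 → sphere (0 : X) 1)
    (hΔiso : Isometry Δ) (hΔsurj : Function.Surjective Δ)
    (n : Γ) (μ : ℂ) (hμ : ‖μ‖ = 1)
    (x y : sphere (0 : C₀(Γ, ℂ)) 1)
    (hx : (x : C₀(Γ, ℂ)) = μ • stdBasis n)
    (hy : (y : C₀(Γ, ℂ)) = -(μ • stdBasis n)) :
    (Δ y : X) = -(Δ x : X) := by
  classical
  have hnorm : ∀ u : sphere (0 : C₀(Γ, ℂ)) 1, ‖(u : C₀(Γ, ℂ))‖ = 1 := fun u =>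
    mem_sphere_zero_iff_norm.mp u.2
  have hnormX : ∀ u : sphere (0 : X) 1, ‖(u : X)‖ = 1 := fun u =>
    mem_sphere_zero_iff_norm.mp u.2
  -- for each `p`, there is `q` with `Δ q = -(Δ p)`
  have hσ : ∀ p : sphere (0 : C₀(Γ, ℂ)) 1, ∃ q, (Δ q : X) = -(Δ p : X) := by
    intro p
    have hmem : -(Δ p : X) ∈ sphere (0 : X) 1 := by
      rw [mem_sphere_zero_iff_norm, norm_neg]; exact hnormX _
    obtain ⟨q, hq⟩ := hΔsurj ⟨-(Δ p : X), hmem⟩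
    exact ⟨q, by rw [hq]⟩
  -- distance transfer
  have hdist : ∀ u v : sphere (0 : C₀(Γ, ℂ)) 1,
      ‖(u : C₀(Γ, ℂ)) - (v : C₀(Γ, ℂ))‖ = ‖(Δ u : X) - (Δ v : X)‖ := by
    intro u v
    have h := hΔiso.dist_eq u v
    rw [Subtype.dist_eq, Subtype.dist_eq, dist_eq_norm, dist_eq_norm] at h
    exact h.symm
  -- sphere membership of single-coordinate points
  have hsb : ∀ (j : Γ) (β : ℂ), ‖β‖ = 1 → ‖β • stdBasis j‖ = 1 := by
    intro j β hβ
    apply le_antisymm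
    · apply c0_norm_le _ zero_le_one
      intro k
      by_cases hk : k = j <;>
        simp [ZeroAtInftyContinuousMap.coe_smul, Pi.smul_apply, smul_eq_mul, hk, hβ]
    · have h := c0_apply_norm_le (β • stdBasis j) j
      simpa [ZeroAtInftyContinuousMap.coe_smul, Pi.smul_apply, smul_eq_mul, hβ] using h
  -- `q` with `Δ q = -(Δ p)` for `p = β • e_j` satisfies `q j = -β`
  have hqcoord : ∀ (j : Γ) (β : ℂ) (hβ : ‖β‖ = 1) (p q : sphere (0 : C₀(Γ, ℂ)) 1),
      (p : C₀(Γ, ℂ)) = β • stdBasis j → (Δ q : X) = -(Δ p : X) →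
      (q : C₀(Γ, ℂ)) j = -β := by
    intro j β hβ p q hp hq
    have h2 : ‖(q : C₀(Γ, ℂ)) - (p : C₀(Γ, ℂ))‖ = 2 := by
      rw [hdist q p, hq]
      have : -(Δ p : X) - (Δ p : X) = (-2 : ℝ) • (Δ p : X) := by
        rw [neg_smul, two_smul]; abel
      rw [this, norm_smul, hnormX]
      norm_num
    have hpj : (p : C₀(Γ, ℂ)) j = β := by
      simp [hp, ZeroAtInftyContinuousMap.coe_smul, Pi.smul_apply, smul_eq_mul]
    have := coord_neg (q : C₀(Γ, ℂ)) (p : C₀(Γ, ℂ)) j (hnorm q).le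
      (by rw [hpj]; exact hβ)
      (fun i hi => by simp [hp, ZeroAtInftyContinuousMap.coe_smul, Pi.smul_apply,
        smul_eq_mul, hi]) h2
    rw [this, hpj]
  -- main argument
  obtain ⟨z, hz⟩ := hσ x
  -- coordinate n of z
  have hzn : (z : C₀(Γ, ℂ)) n = -μ := by
    have := hqcoord n μ hμ x z hx hz
    exact this
  -- coordinates j ≠ n of z vanish
  have hzj : ∀ j, j ≠ n → (z : C₀(Γ, ℂ)) j = 0 := by
    intro j hj
    -- first: for every unimodular β, ‖z j + β‖ ≤ 1
    have key : ∀ β : ℂ, ‖β‖ = 1 → ‖(z : C₀(Γ, ℂ)) j + β‖ ≤ 1 := by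
      intro β hβ
      have hpmem : β • stdBasis j ∈ sphere (0 : C₀(Γ, ℂ)) 1 := by
        rw [mem_sphere_zero_iff_norm]; exact hsb j β hβ
      set p : sphere (0 : C₀(Γ, ℂ)) 1 := ⟨β • stdBasis j, hpmem⟩ with hpdef
      obtain ⟨q, hq⟩ := hσ p
      have hqj : (q : C₀(Γ, ℂ)) j = -β := hqcoord j β hβ p q rfl hq
      have hβ' : ‖β‖ = 1 := hβ
      have hμ' : ‖μ‖ = 1 := hμ
      -- ‖z - q‖ = ‖p - x‖ = 1
      have h1 : ‖(z : C₀(Γ, ℂ)) - (q : C₀(Γ, ℂ))‖ = 1 := by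
        rw [hdist z q, hz, hq]
        have : -(Δ x : X) - -(Δ p : X) = -((Δ x : X) - (Δ p : X)) := by abel
        rw [this, norm_neg, ← hdist x p]
        -- ‖x - p‖ = 1
        apply le_antisymm
        · apply c0_norm_le _ zero_le_one
          intro k
          have hxk : (x : C₀(Γ, ℂ)) k = if k = n then μ else 0 := by
            simp [hx, ZeroAtInftyContinuousMap.coe_smul, Pi.smul_apply, smul_eq_mul]
          have hpk : (p : C₀(Γ, ℂ)) k = if k = j then β else 0 := by
            simp [hpdef, ZeroAtInftyContinuousMap.coe_smul, Pi.smul_apply, smul_eq_mul]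
          rw [ZeroAtInftyContinuousMap.sub_apply, hxk, hpk]
          by_cases hk1 : k = n
          · have hk2 : k ≠ j := by rw [hk1]; exact fun h => hj h.symm
            have hnj : n ≠ j := Ne.symm hj
            simp [hk1, hk2, hnj, hμ']
          · by_cases hk2 : k = j
            · simp [hk1, hk2, hj, hβ']
            · simp [hk1, hk2]
        · have h := c0_apply_norm_le ((x : C₀(Γ, ℂ)) - (p : C₀(Γ, ℂ))) j
          have hxj : (x : C₀(Γ, ℂ)) j = 0 := by
            simp [hx, ZeroAtInftyContinuousMap.coe_smul, Pi.smul_apply, smul_eq_mul, hj]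
          have hpj : (p : C₀(Γ, ℂ)) j = β := by
            simp [hpdef, ZeroAtInftyContinuousMap.coe_smul, Pi.smul_apply, smul_eq_mul]
          rw [ZeroAtInftyContinuousMap.sub_apply, hxj, hpj] at h
          simpa [hβ'] using h
      have h2 := c0_apply_norm_le ((z : C₀(Γ, ℂ)) - (q : C₀(Γ, ℂ))) j
      rw [ZeroAtInftyContinuousMap.sub_apply, hqj, h1] at h2
      simpa [sub_neg_eq_add] using h2
    -- conclude z j = 0
    by_contra hc
    set c := (z : C₀(Γ, ℂ)) j with hcdef
    have hcpos : 0 < ‖c‖ := norm_pos_iff.mpr hc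
    have hβ : ‖(‖c‖ : ℂ)⁻¹ * c‖ = 1 := by
      rw [norm_mul, norm_inv, Complex.norm_real, Real.norm_eq_abs, abs_of_pos hcpos]
      field_simp
    have := key _ hβ
    have hval : c + (‖c‖ : ℂ)⁻¹ * c = c * (1 + (‖c‖ : ℂ)⁻¹) := by ring
    rw [hval, norm_mul] at this
    have hfac : ‖(1 : ℂ) + (‖c‖ : ℂ)⁻¹‖ = 1 + ‖c‖⁻¹ := by
      have : (1 : ℂ) + (‖c‖ : ℂ)⁻¹ = ((1 + ‖c‖⁻¹ : ℝ) : ℂ) := by push_cast; ring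
      rw [this, Complex.norm_real, Real.norm_eq_abs, abs_of_pos]
      positivity
    rw [hfac] at this
    have : ‖c‖ + 1 ≤ 1 := by
      have hinv : ‖c‖ * ‖c‖⁻¹ = 1 := mul_inv_cancel₀ (ne_of_gt hcpos)
      nlinarith
    linarith
  -- conclude y = z
  have hyz : y = z := by
    apply Subtype.ext
    rw [hy]
    ext k
    by_cases hk : k = n
    · subst hk
      simp [ZeroAtInftyContinuousMap.coe_smul, Pi.smul_apply, smul_eq_mul, hzn]
    · simp [ZeroAtInftyContinuousMap.coe_smul, Pi.smul_apply, smul_eq_mul, hk, hzj k hk]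
  rw [hyz, hz]
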